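/- Let F : ℝ³ → ℝ be a function such that there exist a continuous strictly positive function g : [0, ∞) → ℝ and a continuous strictly positive function h : ℝ → ℝ with F(v) = g(‖v‖²) for all v ∈ ℝ³ and F(v) = h(v₁) · h(v₂) · h(v₃) for all v = (v₁, v₂, v₃) ∈ ℝ³. Then there exist real constants C₁ > 0 and C₂ such that F(v) = C₁ · exp(C₂ · ‖v‖²) for all v ∈ ℝ³. -/

import Mathlib

open Real Set

/-- Maxwell's postulates: if `F : ℝ³ → ℝ` depends only on the squared speed
(via a continuous strictly positive `g` on `[0, ∞)`) and factors as a product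
of a continuous strictly positive function `h` of each velocity component,
then `F v = C₁ * exp (C₂ * ‖v‖²)` for some `C₁ > 0` and `C₂`. -/
theorem maxwell_distribution_form
    (F : EuclideanSpace ℝ (Fin 3) → ℝ)
    (g : ℝ → ℝ) (hg_cont : ContinuousOn g (Ici (0 : ℝ)))
    (hg_pos : ∀ t ∈ Ici (0 : ℝ), 0 < g t)
    (h : ℝ → ℝ) (hh_cont : Continuous h) (hh_pos : ∀ x : ℝ, 0 < h x)
    (hFg : ∀ v : EuclideanSpace ℝ (Fin 3), F v = g (‖v‖ ^ 2))
    (hFh : ∀ v : EuclideanSpace ℝ (Fin 3), F v = h (v 0) * h (v 1) * h (v 2)) :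
    ∃ C₁ C₂ : ℝ, 0 < C₁ ∧
      ∀ v : EuclideanSpace ℝ (Fin 3), F v = C₁ * Real.exp (C₂ * ‖v‖ ^ 2) := by
  -- key pointwise relation
  have key : ∀ x y z : ℝ, g (x ^ 2 + y ^ 2 + z ^ 2) = h x * h y * h z := by
    intro x y z
    set v : EuclideanSpace ℝ (Fin 3) := (WithLp.equiv 2 (Fin 3 → ℝ)).symm ![x, y, z] with hv
    have hn : ‖v‖ ^ 2 = x ^ 2 + y ^ 2 + z ^ 2 := by
      rw [EuclideanSpace.norm_eq, Real.sq_sqrt (by positivity)]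
      simp [Fin.sum_univ_three, v, sq_abs]
    have h0 : v 0 = x := rfl
    have h1 : v 1 = y := rfl
    have h2 : v 2 = z := rfl
    rw [← hn, ← hFg v, hFh v, h0, h1, h2]
  set c : ℝ := h 0 ^ 3 with hc
  have hcpos : 0 < c := pow_pos (hh_pos 0) 3
  have hg0 : g 0 = c := by
    have h000 : g 0 = h 0 * h 0 * h 0 := by simpa using key 0 0 0
    rw [h000, hc]; ring
  -- g restricted, as exponential-type function via log
  set ψ : ℝ → ℝ := fun t => Real.log (g t) - Real.log c with hψ
  have hψ0 : ψ 0 = 0 := by simp [hψ, hg0]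
  -- additivity of ψ on nonneg reals
  have hgadd : ∀ s t : ℝ, 0 ≤ s → 0 ≤ t → g (s + t) * c = g s * g t := by
    intro s t hs ht
    have h1 := key (Real.sqrt s) (Real.sqrt t) 0
    have h2 := key (Real.sqrt s) 0 0
    have h3 := key (Real.sqrt t) 0 0
    rw [Real.sq_sqrt hs] at h1 h2
    rw [Real.sq_sqrt ht] at h1 h3
    norm_num at h1 h2 h3
    rw [h1, h2, h3, hc]; ring
  have hψadd : ∀ s t : ℝ, 0 ≤ s → 0 ≤ t → ψ (s + t) = ψ s + ψ t := by
    intro s t hs ht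
    have hgs := hg_pos s (mem_Ici.mpr hs)
    have hgt := hg_pos t (mem_Ici.mpr ht)
    have hgst := hg_pos (s + t) (mem_Ici.mpr (by linarith))
    have := hgadd s t hs ht
    have hlog : Real.log (g (s + t)) + Real.log c = Real.log (g s) + Real.log (g t) := by
      rw [← Real.log_mul (ne_of_gt hgst) (ne_of_gt hcpos), this,
        Real.log_mul (ne_of_gt hgs) (ne_of_gt hgt)]
    simp only [hψ]; linarith
  -- ψ is continuous on Ici 0
  have hψcont : ContinuousOn ψ (Ici 0) := by
    apply ContinuousOn.sub _ continuousOn_const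
    exact Real.continuousOn_log.comp hg_cont
      (fun t ht => ne_of_gt (hg_pos t (mem_Ici.mpr ht)))
  -- extend ψ to an additive function Ψ on all of ℝ
  set Ψ : ℝ → ℝ := fun t => ψ (max t 0) - ψ (max (-t) 0) with hΨ
  have hΨeq : ∀ t : ℝ, 0 ≤ t → Ψ t = ψ t := by
    intro t ht
    simp [hΨ, max_eq_left ht, max_eq_right (neg_nonpos.mpr ht), hψ0]
  have hΨneg : ∀ t : ℝ, Ψ (-t) = -Ψ t := by
    intro t; simp only [hΨ, neg_neg]; ring
  have hΨadd : ∀ a b : ℝ, Ψ (a + b) = Ψ a + Ψ b := by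
    have main : ∀ a b : ℝ, 0 ≤ a → Ψ (a + b) = Ψ a + Ψ b := by
      intro a b ha
      rcases le_or_gt 0 b with hb | hb
      · rw [hΨeq a ha, hΨeq b hb, hΨeq _ (by positivity), hψadd a b ha hb]
      · rcases le_or_gt 0 (a + b) with hab | hab
        · -- ψ a = ψ (a+b) + ψ (-b)
          have : ψ ((a + b) + (-b)) = ψ (a + b) + ψ (-b) :=
            hψadd _ _ hab (by linarith)
          simp only [add_neg_cancel_right] at this
          have hΨb : Ψ b = -ψ (-b) := by
            have h' := hΨneg (-b)
            rw [neg_neg] at h'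
            rw [h', hΨeq _ (by linarith)]
          rw [hΨeq _ hab, hΨeq _ ha, hΨb]; linarith
        · -- ψ (-b) = ψ (-(a+b)) + ψ a
          have : ψ (-(a + b) + a) = ψ (-(a + b)) + ψ a :=
            hψadd _ _ (by linarith) ha
          have heq : -(a + b) + a = -b := by ring
          rw [heq] at this
          have hΨab : Ψ (a + b) = -ψ (-(a + b)) := by
            have h' := hΨneg (-(a + b))
            rw [neg_neg] at h'
            rw [h', hΨeq _ (by linarith)]
          have hΨb : Ψ b = -ψ (-b) := by
            have h' := hΨneg (-b)
            rw [neg_neg] at h'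
            rw [h', hΨeq _ (by linarith)]
          rw [hΨab, hΨeq _ ha, hΨb]; linarith
    intro a b
    rcases le_or_gt 0 a with ha | ha
    · exact main a b ha
    · rcases le_or_gt 0 b with hb | hb
      · rw [add_comm, main b a hb, add_comm]
      · have := main (-a) (-b) (by linarith)
        rw [← neg_add, hΨneg, hΨneg, hΨneg] at this
        linarith
  -- Ψ is continuous
  have hΨcont : Continuous Ψ := by
    have h1 : Continuous fun t : ℝ => ψ (max t 0) :=
      hψcont.comp_continuous (continuous_id.max continuous_const)
        (fun t => mem_Ici.mpr (le_max_right _ _))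
    have h2 : Continuous fun t : ℝ => ψ (max (-t) 0) :=
      hψcont.comp_continuous (continuous_neg.max continuous_const)
        (fun t => mem_Ici.mpr (le_max_right _ _))
    exact h1.sub h2
  -- linearity
  set Φ : ℝ →+ ℝ := AddMonoidHom.mk' Ψ hΨadd with hΦ
  have hlin : ∀ t : ℝ, Ψ t = t * Ψ 1 := by
    intro t
    have := (Φ.toRealLinearMap hΨcont).map_smul t 1
    simpa [hΦ, smul_eq_mul] using this
  refine ⟨c, Ψ 1, hcpos, fun v => ?_⟩
  have hn : (0 : ℝ) ≤ ‖v‖ ^ 2 := by positivity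
  have := hlin (‖v‖ ^ 2)
  rw [hΨeq _ hn, hψ] at this
  have hgv : Real.log (g (‖v‖ ^ 2)) = Ψ 1 * ‖v‖ ^ 2 + Real.log c := by
    simp only at this; linarith
  have hgpos := hg_pos (‖v‖ ^ 2) hn
  rw [hFg v, ← Real.exp_log hgpos, hgv, Real.exp_add, Real.exp_log hcpos]
  ring
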